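/- There is an R-algebra isomorphism from the skew Hecke algebra H_R(G,H,A,α) onto the G-invariant subalgebra (A ⊗ End_R(R[G/H])^op)^G, given explicitly by φ ↦ Σ_{gH,kH} α_k(φ(k⁻¹gH)) ⊗ E_{gH,kH}, where E_{gH,kH} is the R-linear map sending kH to gH and all other cosets to 0. -/

import Mathlib

open scoped BigOperators TensorProduct

set_option linter.unusedSectionVars false
set_option maxHeartbeats 1000000

def SkewHecke.IsInv {R A G : Type*} [CommRing R] [Ring A] [Algebra R A] [Group G]
    (H : Subgroup G) (α : G →* (A ≃ₐ[R] A)) (φ : G ⧸ H → A) : Prop :=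
  ∀ h ∈ H, ∀ g : G, φ (QuotientGroup.mk (h * g)) = α h (φ (QuotientGroup.mk g))

def SkewHecke.IsSection {G : Type*} [Group G] {H : Subgroup G} (s : G ⧸ H → G) : Prop :=
  ∀ c : G ⧸ H, QuotientGroup.mk (s c) = c

noncomputable def SkewHecke.conv {R A G : Type*} [CommRing R] [Ring A] [Algebra R A] [Group G]
    (H : Subgroup G) [Fintype (G ⧸ H)] (α : G →* (A ≃ₐ[R] A))
    (s : G ⧸ H → G) (φ ψ : G ⧸ H → A) : G ⧸ H → A :=
  fun x => ∑ c : G ⧸ H, φ c * α (s c) (ψ ((s c)⁻¹ • x))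

noncomputable def SkewHecke.delta {A G : Type*} [Ring A] [Group G] (H : Subgroup G)
    (a : A) : G ⧸ H → A := by
  classical exact fun x => if x = QuotientGroup.mk (1 : G) then a else 0

/-- Left translation by `g` on the free module `R[G/H]`. -/
noncomputable def SkewHecke.P (R : Type*) {G : Type*} [CommRing R] [Group G]
    (H : Subgroup G) (g : G) : ((G ⧸ H) →₀ R) →ₗ[R] ((G ⧸ H) →₀ R) :=
  Finsupp.lmapDomain R R (fun c => g • c)

/-- The matrix unit `E_{c,d} : R[G/H] → R[G/H]`, sending `d` to `c` and other cosets to 0. -/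
noncomputable def SkewHecke.matUnit (R : Type*) {G : Type*} [CommRing R] [Group G]
    (H : Subgroup G) (c d : G ⧸ H) : Module.End R ((G ⧸ H) →₀ R) :=
  (Finsupp.lsingle c).comp (Finsupp.lapply d)

/-- Conjugation by `g` on `End_R(R[G/H])`, `T ↦ P_g ∘ T ∘ P_{g⁻¹}`. -/
noncomputable def SkewHecke.conjE (R : Type*) {G : Type*} [CommRing R] [Group G]
    (H : Subgroup G) (g : G) :
    Module.End R ((G ⧸ H) →₀ R) →ₗ[R] Module.End R ((G ⧸ H) →₀ R) :=
  (LinearMap.llcomp R _ _ _ (SkewHecke.P R H g)).comp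
    (LinearMap.lcomp R _ (SkewHecke.P R H g⁻¹))

/-- The diagonal action of `g` on `A ⊗ End_R(R[G/H])^op`. -/
noncomputable def SkewHecke.actT {R A G : Type*} [CommRing R] [Ring A] [Algebra R A]
    [Group G] (H : Subgroup G) (α : G →* (A ≃ₐ[R] A)) (g : G) :
    (A ⊗[R] (Module.End R ((G ⧸ H) →₀ R))ᵐᵒᵖ) →ₗ[R]
      (A ⊗[R] (Module.End R ((G ⧸ H) →₀ R))ᵐᵒᵖ) :=
  TensorProduct.map (α g).toLinearMap
    ((MulOpposite.opLinearEquiv R).toLinearMap.comp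
      ((SkewHecke.conjE R H g).comp (MulOpposite.opLinearEquiv R).symm.toLinearMap))

namespace SkewHecke

variable {R A G : Type*} [CommRing R] [Ring A] [Algebra R A] [Group G]
    (H : Subgroup G) [Fintype (G ⧸ H)] (α : G →* (A ≃ₐ[R] A))

lemma op_sum {M ι : Type*} [AddCommMonoid M] (s : Finset ι) (f : ι → M) :
    MulOpposite.op (∑ i ∈ s, f i) = ∑ i ∈ s, MulOpposite.op (f i) := by
  classical
  induction s using Finset.induction with
  | empty => simp
  | insert _ _ h ih => simp [Finset.sum_insert h, ih]

lemma matUnit_apply (c d : G ⧸ H) (f : (G ⧸ H) →₀ R) :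
    matUnit R H c d f = Finsupp.single c (f d) := rfl

lemma P_single (g : G) (x : G ⧸ H) (r : R) :
    P R H g (Finsupp.single x r) = Finsupp.single (g • x) r := by
  simp [P, Finsupp.mapDomain_single]

lemma conjE_matUnit (g : G) (c d : G ⧸ H) :
    conjE R H g (matUnit R H c d) = matUnit R H (g • c) (g • d) := by
  classical
  apply Finsupp.lhom_ext
  intro x r
  have h1 : conjE R H g (matUnit R H c d) (Finsupp.single x r)
      = Finsupp.single (g • c) ((Finsupp.single (g⁻¹ • x) r) d) := by
    simp only [conjE, LinearMap.comp_apply, LinearMap.llcomp_apply, LinearMap.lcomp_apply,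
      P_single, matUnit_apply]
  rw [h1, matUnit_apply]
  congr 1
  simp only [Finsupp.single_apply, inv_smul_eq_iff]

/-- evaluation functional on `End^op`: `T ↦ (T (single d 1)) c`. -/
noncomputable def ev (c d : G ⧸ H) : (Module.End R ((G ⧸ H) →₀ R))ᵐᵒᵖ →ₗ[R] R :=
  (Finsupp.lapply c).comp ((LinearMap.applyₗ (Finsupp.single d (1:R))).comp
    (MulOpposite.opLinearEquiv R).symm.toLinearMap)

noncomputable def coeff (c d : G ⧸ H) :
    (A ⊗[R] (Module.End R ((G ⧸ H) →₀ R))ᵐᵒᵖ) →ₗ[R] A :=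
  (TensorProduct.rid R A).toLinearMap.comp (TensorProduct.map LinearMap.id (ev H c d))

lemma coeff_tmul (c d : G ⧸ H) (a : A) (T : Module.End R ((G ⧸ H) →₀ R)) :
    coeff H c d (a ⊗ₜ[R] MulOpposite.op T) = (T (Finsupp.single d 1)) c • a := by
  simp [coeff, ev, TensorProduct.rid_tmul]

open scoped Classical in
lemma coeff_matUnit (c d c' d' : G ⧸ H) (a : A) :
    coeff H c d (a ⊗ₜ[R] MulOpposite.op (matUnit R H c' d')) =
      if c = c' ∧ d = d' then a else 0 := by
  rw [coeff_tmul, matUnit_apply]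
  by_cases h1 : c = c' <;> by_cases h2 : d = d' <;>
    simp [h1, h2, Finsupp.single_apply, Ne.symm, eq_comm]

lemma end_expand (T : Module.End R ((G ⧸ H) →₀ R)) :
    T = ∑ c : G ⧸ H, ∑ d : G ⧸ H, (T (Finsupp.single d 1)) c • matUnit R H c d := by
  classical
  apply Finsupp.lhom_ext
  intro x r
  have hx : (Finsupp.single x r : (G ⧸ H) →₀ R) = r • Finsupp.single x (1:R) := by simp
  rw [hx, map_smul]
  simp only [LinearMap.sum_apply, LinearMap.smul_apply, matUnit_apply, map_smul]
  rw [Finset.sum_comm]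
  rw [Finset.sum_eq_single x (fun d _ hd => by
        apply Finset.sum_eq_zero; intro c _
        simp [Finsupp.single_apply, Ne.symm hd]) (by simp)]
  ext y
  simp only [Finsupp.smul_apply, Finsupp.finset_sum_apply, smul_eq_mul]
  simp [Finsupp.single_apply, mul_ite, Finset.sum_ite_eq', mul_comm, Finset.mul_sum]

lemma expand (t : A ⊗[R] (Module.End R ((G ⧸ H) →₀ R))ᵐᵒᵖ) :
    t = ∑ c : G ⧸ H, ∑ d : G ⧸ H,
        coeff H c d t ⊗ₜ[R] MulOpposite.op (matUnit R H c d) := by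
  induction t with
  | zero => simp
  | add x y hx hy =>
      simp only [map_add, TensorProduct.add_tmul, Finset.sum_add_distrib]
      exact congrArg₂ (· + ·) hx hy
  | tmul a T =>
      induction T using MulOpposite.rec' with
      | _ T =>
      conv_lhs => rw [end_expand H T]
      rw [show (MulOpposite.op (∑ c : G ⧸ H, ∑ d : G ⧸ H,
            (T (Finsupp.single d 1)) c • matUnit R H c d)) = ∑ c : G ⧸ H, ∑ d : G ⧸ H,
            (T (Finsupp.single d 1)) c • MulOpposite.op (matUnit R H c d) from by
        rw [op_sum]
        exact Finset.sum_congr rfl fun c _ => by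
          rw [op_sum]
          exact Finset.sum_congr rfl fun d _ => by simp [MulOpposite.op_smul]]
      simp only [TensorProduct.tmul_sum, TensorProduct.tmul_smul, coeff_tmul]
      refine Finset.sum_congr rfl fun c _ => Finset.sum_congr rfl fun d _ => ?_
      rw [TensorProduct.smul_tmul']


open scoped Classical in
lemma coeff_dsum (F : G ⧸ H → G ⧸ H → A) (c d : G ⧸ H) :
    coeff H c d (∑ c' : G ⧸ H, ∑ d' : G ⧸ H,
      F c' d' ⊗ₜ[R] MulOpposite.op (matUnit R H c' d')) = F c d := by
  rw [map_sum]
  rw [Finset.sum_eq_single c (fun c' _ hc' => by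
      rw [map_sum]
      apply Finset.sum_eq_zero; intro d' _
      rw [coeff_matUnit]
      simp [Ne.symm, hc'])
    (by simp)]
  rw [map_sum]
  rw [Finset.sum_eq_single d (fun d' _ hd' => by rw [coeff_matUnit]; simp [Ne.symm hd'])
    (by simp)]
  rw [coeff_matUnit]; simp

lemma coeff_ext {t t' : A ⊗[R] (Module.End R ((G ⧸ H) →₀ R))ᵐᵒᵖ}
    (h : ∀ c d : G ⧸ H, coeff H c d t = coeff H c d t') : t = t' := by
  rw [expand H t, expand H t']
  exact Finset.sum_congr rfl fun c _ => Finset.sum_congr rfl fun d _ => by rw [h]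

lemma actT_tmul (g : G) (a : A) (T : Module.End R ((G ⧸ H) →₀ R)) :
    actT H α g (a ⊗ₜ[R] MulOpposite.op T)
      = (α g a) ⊗ₜ[R] MulOpposite.op (conjE R H g T) := rfl

lemma P_apply (g : G) (f : (G ⧸ H) →₀ R) (c : G ⧸ H) :
    (P R H g f) c = f (g⁻¹ • c) := by
  rw [P, Finsupp.lmapDomain_apply]
  simpa using Finsupp.mapDomain_apply (MulAction.injective g) f (g⁻¹ • c)

lemma coeff_actT (g : G) (c d : G ⧸ H) (t : A ⊗[R] (Module.End R ((G ⧸ H) →₀ R))ᵐᵒᵖ) :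
    coeff H c d (actT H α g t) = α g (coeff H (g⁻¹ • c) (g⁻¹ • d) t) := by
  induction t with
  | zero => simp
  | add x y hx hy => simp [map_add, hx, hy]
  | tmul a T =>
      induction T using MulOpposite.rec' with
      | _ T =>
      rw [actT_tmul, coeff_tmul, coeff_tmul, map_smul]
      have hc : conjE R H g T (Finsupp.single d 1)
          = P R H g (T (Finsupp.single (g⁻¹ • d) 1)) := by
        show P R H g (T (P R H g⁻¹ (Finsupp.single d 1))) = _
        rw [P_single]
      rw [hc, P_apply]

lemma matUnit_mul (c d c' d' : G ⧸ H) [Decidable (d = c')] :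
    matUnit R H c d * matUnit R H c' d'
      = if d = c' then matUnit R H c d' else 0 := by
  classical
  apply Finsupp.lhom_ext
  intro x r
  show matUnit R H c d (matUnit R H c' d' (Finsupp.single x r)) = _
  rw [matUnit_apply, matUnit_apply, Finsupp.single_apply]
  by_cases h : d = c'
  · subst h; simp [matUnit_apply]
  · simp [h, Ne.symm h]

lemma coeff_mul (C D : G ⧸ H) (t u : A ⊗[R] (Module.End R ((G ⧸ H) →₀ R))ᵐᵒᵖ) :
    coeff H C D (t * u) = ∑ c : G ⧸ H, coeff H c D t * coeff H C c u := by
  induction t with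
  | zero => simp
  | add x y hx hy =>
      simp only [add_mul, map_add, hx, hy, add_mul, ← Finset.sum_add_distrib]
  | tmul a T =>
    induction u with
    | zero => simp
    | add x y hx hy =>
        simp only [mul_add, map_add, hx, hy, mul_add, ← Finset.sum_add_distrib]
    | tmul b S =>
        induction T using MulOpposite.rec' with
        | _ T =>
        induction S using MulOpposite.rec' with
        | _ S =>
        rw [Algebra.TensorProduct.tmul_mul_tmul, ← MulOpposite.op_mul, coeff_tmul]
        simp only [coeff_tmul]
        have expand1 : T (Finsupp.single D 1)
            = ∑ c : G ⧸ H, (T (Finsupp.single D 1)) c • Finsupp.single c (1:R) := by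
          rw [← Finsupp.univ_sum_single (T (Finsupp.single D 1))]
          simp [Finsupp.smul_single]
        calc (((S * T) : Module.End R ((G ⧸ H) →₀ R)) (Finsupp.single D 1)) C • (a * b)
            = ((S (T (Finsupp.single D 1))) C) • (a * b) := rfl
          _ = (∑ c : G ⧸ H, (T (Finsupp.single D 1)) c * (S (Finsupp.single c 1)) C)
                • (a * b) := by
              conv_lhs => rw [expand1]
              rw [map_sum S (fun c => (T (Finsupp.single D 1)) c • Finsupp.single c (1:R))
                Finset.univ, Finsupp.finset_sum_apply, Finset.sum_smul, Finset.sum_smul]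
              refine Finset.sum_congr rfl fun c _ => ?_
              rw [map_smul]
              simp
          _ = ∑ c : G ⧸ H, ((T (Finsupp.single D 1)) c • a) * ((S (Finsupp.single c 1)) C • b) := by
              rw [Finset.sum_smul]
              refine Finset.sum_congr rfl fun c _ => ?_
              rw [smul_mul_assoc, mul_smul_comm, smul_smul]

variable {H} {α}

lemma IsInv.smul {φ : G ⧸ H → A} (hφ : IsInv H α φ) {h : G} (hh : h ∈ H) (x : G ⧸ H) :
    φ (h • x) = α h (φ x) := by
  induction x using QuotientGroup.induction_on with
  | H g => exact hφ h hh g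

lemma IsInv.indep {φ : G ⧸ H → A} (hφ : IsInv H α φ) {k k' : G}
    (hk : (QuotientGroup.mk k : G ⧸ H) = QuotientGroup.mk k') (x : G ⧸ H) :
    α k (φ (k⁻¹ • x)) = α k' (φ (k'⁻¹ • x)) := by
  have hh : k'⁻¹ * k ∈ H := by
    have h0 : k⁻¹ * k' ∈ H := by rwa [QuotientGroup.eq] at hk
    simpa [mul_inv_rev] using H.inv_mem h0
  have h1 : k = k' * (k'⁻¹ * k) := by group
  calc α k (φ (k⁻¹ • x))
      = α k' ((α (k'⁻¹ * k)) (φ ((k'⁻¹*k)⁻¹ • k'⁻¹ • x))) := by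
        rw [← AlgEquiv.mul_apply, ← map_mul, ← h1, smul_smul]
        congr 2
        group
    _ = α k' (φ (k'⁻¹ • x)) := by
        rw [← hφ.smul hh]
        congr 1
        exact congrArg φ (smul_inv_smul (k'⁻¹ * k) (k'⁻¹ • x))

lemma alg_mul_apply (g k : G) (a : A) : α (g * k) a = α g (α k a) := by
  rw [map_mul]; rfl

lemma section_inv_smul {s : G ⧸ H → G} (hs : IsSection s) (d : G ⧸ H) :
    (s d)⁻¹ • d = (QuotientGroup.mk 1 : G ⧸ H) := by
  calc (s d)⁻¹ • d = (s d)⁻¹ • (QuotientGroup.mk (s d) : G ⧸ H) := by rw [hs d]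
    _ = QuotientGroup.mk ((s d)⁻¹ * s d) := rfl
    _ = QuotientGroup.mk 1 := by rw [inv_mul_cancel]

lemma delta_one (a : A) : delta H a (QuotientGroup.mk 1 : G ⧸ H) = a := by
  unfold delta
  exact if_pos rfl

lemma delta_ne (a : A) {x : G ⧸ H} (hx : x ≠ QuotientGroup.mk 1) : delta H a x = 0 := by
  unfold delta
  exact if_neg hx

end SkewHecke

/-- The map `φ ↦ Σ_{gH,kH} α_k(φ(k⁻¹gH)) ⊗ E_{gH,kH}` is an `R`-algebra isomorphism from
the skew Hecke algebra `H_R(G,H,A,α)` onto the `G`-invariant subalgebra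
`(A ⊗ End_R(R[G/H])^op)^G`. -/
theorem skewHecke_iso_tensor_end_op_invariants {R A G : Type*} [CommRing R] [Ring A]
    [Algebra R A] [Group G] (H : Subgroup G) [Fintype (G ⧸ H)]
    (α : G →* (A ≃ₐ[R] A)) (s : G ⧸ H → G) (hs : SkewHecke.IsSection s) :
    let e : (G ⧸ H → A) → (A ⊗[R] (Module.End R ((G ⧸ H) →₀ R))ᵐᵒᵖ) :=
      fun φ => ∑ c : G ⧸ H, ∑ d : G ⧸ H,
        α (s d) (φ ((s d)⁻¹ • c)) ⊗ₜ[R] MulOpposite.op (SkewHecke.matUnit R H c d)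
    -- `e` is a bijection from the skew Hecke algebra onto the `G`-invariants
    Set.BijOn e {φ | SkewHecke.IsInv H α φ}
      {t | ∀ g : G, SkewHecke.actT H α g t = t} ∧
    -- `e` is `R`-linear
    (∀ φ ψ : G ⧸ H → A, e (φ + ψ) = e φ + e ψ) ∧
    (∀ (r : R) (φ : G ⧸ H → A), e (r • φ) = r • e φ) ∧
    -- `e` is multiplicative and unital
    (∀ φ ψ : G ⧸ H → A, SkewHecke.IsInv H α φ → SkewHecke.IsInv H α ψ →
      e (SkewHecke.conv H α s φ ψ) = e φ * e ψ) ∧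
    e (SkewHecke.delta H (1 : A)) = 1 := by
  classical
  intro e
  have coeff_e : ∀ (φ : G ⧸ H → A) (c d : G ⧸ H),
      SkewHecke.coeff H c d (e φ) = α (s d) (φ ((s d)⁻¹ • c)) := fun φ c d =>
    SkewHecke.coeff_dsum H (fun c' d' => α (s d') (φ ((s d')⁻¹ • c'))) c d
  refine ⟨⟨?maps, ?inj, ?surj⟩, ?add, ?smul, ?mul, ?one⟩
  case maps =>
    intro φ hφ g
    apply SkewHecke.coeff_ext H
    intro c d
    rw [SkewHecke.coeff_actT, coeff_e, coeff_e]
    have h1 : (QuotientGroup.mk (g * s (g⁻¹ • d)) : G ⧸ H) = QuotientGroup.mk (s d) := by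
      rw [hs d]
      show g • (QuotientGroup.mk (s (g⁻¹ • d)) : G ⧸ H) = d
      rw [hs (g⁻¹ • d), smul_inv_smul]
    have h2 := hφ.indep h1 c
    rw [SkewHecke.alg_mul_apply, mul_inv_rev, mul_smul] at h2
    exact h2
  case inj =>
    intro φ hφ ψ hψ heq
    funext x
    have h := congrArg (fun t => SkewHecke.coeff H (s x • x) x t) heq
    simp only [coeff_e, inv_smul_smul] at h
    exact (α (s x)).injective h
  case surj =>
    intro t ht
    set d0 : G ⧸ H := QuotientGroup.mk 1 with hd0
    set k0 : G := s d0 with hk0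
    have hk0H : k0 ∈ H := by
      have h1 : (QuotientGroup.mk k0 : G ⧸ H) = QuotientGroup.mk 1 := hs d0
      rw [QuotientGroup.eq] at h1
      simpa using H.inv_mem h1
    have hco : ∀ (g : G) (c d : G ⧸ H),
        SkewHecke.coeff H c d t = α g (SkewHecke.coeff H (g⁻¹ • c) (g⁻¹ • d) t) := by
      intro g c d
      conv_lhs => rw [← ht g]
      rw [SkewHecke.coeff_actT]
    refine ⟨fun x => α k0⁻¹ (SkewHecke.coeff H (k0 • x) d0 t), ?_, ?_⟩
    · -- IsInv
      intro h hh g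
      have hu1 : (k0 * h * k0⁻¹)⁻¹ • (k0 • (QuotientGroup.mk (h * g) : G ⧸ H))
          = k0 • (QuotientGroup.mk g : G ⧸ H) := by
        show QuotientGroup.mk ((k0 * h * k0⁻¹)⁻¹ * (k0 * (h * g))) = QuotientGroup.mk (k0 * g)
        exact congrArg _ (by group)
      have hu2 : (k0 * h * k0⁻¹)⁻¹ • d0 = d0 := by
        rw [hd0]
        show QuotientGroup.mk ((k0 * h * k0⁻¹)⁻¹ * 1) = QuotientGroup.mk 1
        rw [QuotientGroup.eq]
        simpa using H.mul_mem (H.mul_mem hk0H hh) (H.inv_mem hk0H)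
      have harg : k0⁻¹ * (k0 * h * k0⁻¹) = h * k0⁻¹ := by group
      calc α k0⁻¹ (SkewHecke.coeff H (k0 • (QuotientGroup.mk (h * g) : G ⧸ H)) d0 t)
          = α k0⁻¹ (α (k0 * h * k0⁻¹) (SkewHecke.coeff H
              ((k0 * h * k0⁻¹)⁻¹ • (k0 • (QuotientGroup.mk (h * g) : G ⧸ H)))
              ((k0 * h * k0⁻¹)⁻¹ • d0) t)) := by rw [← hco (k0 * h * k0⁻¹)]
        _ = α k0⁻¹ (α (k0 * h * k0⁻¹)
              (SkewHecke.coeff H (k0 • (QuotientGroup.mk g : G ⧸ H)) d0 t)) := by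
            rw [hu1, hu2]
        _ = α h (α k0⁻¹ (SkewHecke.coeff H (k0 • (QuotientGroup.mk g : G ⧸ H)) d0 t)) := by
            rw [← SkewHecke.alg_mul_apply, harg, SkewHecke.alg_mul_apply]
    · -- e φ = t
      apply SkewHecke.coeff_ext H
      intro c d
      rw [coeff_e (fun x => α k0⁻¹ (SkewHecke.coeff H (k0 • x) d0 t)) c d]
      have h2 : (s d * k0⁻¹)⁻¹ • c = k0 • (s d)⁻¹ • c := by
        rw [mul_inv_rev, inv_inv, mul_smul]
      have h3 : (s d * k0⁻¹)⁻¹ • d = d0 := by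
        rw [mul_inv_rev, inv_inv, mul_smul, SkewHecke.section_inv_smul hs d, ← hd0]
        rw [hd0]
        show QuotientGroup.mk (k0 * 1) = d0
        rw [mul_one, hk0]
        exact hs d0
      rw [hco (s d * k0⁻¹) c d, h2, h3, ← SkewHecke.alg_mul_apply]
  case add =>
    intro φ ψ
    simp only [e, Pi.add_apply, map_add, TensorProduct.add_tmul, Finset.sum_add_distrib]
  case smul =>
    intro r φ
    simp only [e, Pi.smul_apply, map_smul, TensorProduct.smul_tmul', Finset.smul_sum]
  case mul =>
    intro φ ψ hφ hψ
    apply SkewHecke.coeff_ext H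
    intro C D
    rw [SkewHecke.coeff_mul, coeff_e]
    simp only [coeff_e]
    rw [SkewHecke.conv, map_sum]
    refine Fintype.sum_bijective (fun c => s D • c) (MulAction.bijective (s D)) _ _ ?_
    intro c
    rw [inv_smul_smul, map_mul]
    congr 1
    have hmk : (QuotientGroup.mk (s D * s c) : G ⧸ H) = QuotientGroup.mk (s (s D • c)) := by
      rw [hs (s D • c)]
      show (s D) • (QuotientGroup.mk (s c) : G ⧸ H) = s D • c
      rw [hs c]
    have h4 := hψ.indep hmk C
    rw [SkewHecke.alg_mul_apply, mul_inv_rev, mul_smul] at h4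
    exact h4
  case one =>
    apply SkewHecke.coeff_ext H
    intro c d
    rw [coeff_e]
    have h1 : (1 : A ⊗[R] (Module.End R ((G ⧸ H) →₀ R))ᵐᵒᵖ)
        = (1 : A) ⊗ₜ[R] MulOpposite.op (1 : Module.End R ((G ⧸ H) →₀ R)) := rfl
    rw [h1, SkewHecke.coeff_tmul]
    by_cases hcd : c = d
    · subst hcd
      rw [SkewHecke.section_inv_smul hs c, SkewHecke.delta_one, map_one]
      simp [Finsupp.single_apply]
    · have hne : (s d)⁻¹ • c ≠ (QuotientGroup.mk 1 : G ⧸ H) := by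
        rw [Ne, inv_smul_eq_iff]
        intro hc
        apply hcd
        rw [hc]
        show QuotientGroup.mk (s d * 1) = d
        rw [mul_one]
        exact hs d
      rw [SkewHecke.delta_ne _ hne, map_zero]
      simp [Finsupp.single_apply, Ne.symm hcd]
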